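/- arXiv:1509.06549 — 5 statements merged into one kernel-verified Lean document; each statement's English description precedes it below -/
import Mathlib

section
/- Let D be the group on 𝔽₂³ with multiplication (a₁,b₁,c₁)·(a₂,b₂,c₂) = (a₁+a₂, b₁+b₂, c₁+c₂+b₁a₂+b₁b₂). Define Ξ : D² → 𝔽₂ by Ξ(g₁,g₂) = c₁c₂ + b₁a₂c₂ + b₁c₁a₂ + b₁b₂c₂ + b₁c₁b₂ + c₁a₂ + b₁a₂b₂. Then Ξ is a 2-cocycle: for all g₁,g₂,g₃ ∈ D, Ξ(g₂,g₃) + Ξ(g₁g₂,g₃) + Ξ(g₁,g₂g₃) + Ξ(g₁,g₂) = 0. -/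
abbrev F2 := ZMod 2

/-- The dihedral group of order 8 on 𝔽₂³. -/
def D3 : Type := F2 × F2 × F2

instance : DecidableEq D3 := inferInstanceAs (DecidableEq (F2 × F2 × F2))
instance : Fintype D3 := inferInstanceAs (Fintype (F2 × F2 × F2))

def dmul : D3 → D3 → D3
  | (a1,b1,c1), (a2,b2,c2) => (a1+a2, b1+b2, c1+c2+b1*a2+b1*b2)

instance : Group D3 where
  mul := dmul
  one := ((0,0,0) : D3)
  inv := fun (x : F2 × F2 × F2) => ((x.1, x.2.1, x.2.2 + x.2.1*x.1 + x.2.1*x.2.1) : D3)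
  mul_assoc := fun x y z => by
    obtain ⟨a1,b1,c1⟩ := x; obtain ⟨a2,b2,c2⟩ := y; obtain ⟨a3,b3,c3⟩ := z
    show dmul (dmul _ _) _ = dmul _ (dmul _ _)
    simp only [dmul]
    exact Prod.ext (by ring) (Prod.ext (by ring) (by ring))
  one_mul := by decide
  mul_one := by decide
  inv_mul_cancel := by decide

def aD : D3 → F2 | (a,_,_) => a
def bD : D3 → F2 | (_,b,_) => b
def cD : D3 → F2 | (_,_,c) => c

/-- The 2-cochain `Ξ` on `D₈`. -/
def Xi (g1 g2 : D3) : F2 :=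
  cD g1 * cD g2 + bD g1 * aD g2 * cD g2 + bD g1 * cD g1 * aD g2
    + bD g1 * bD g2 * cD g2 + bD g1 * cD g1 * bD g2 + cD g1 * aD g2
    + bD g1 * aD g2 * bD g2

/-- `Ξ` is a 2-cocycle on `D₈` with trivial 𝔽₂ coefficients. -/
theorem stmt_8 :
    ∀ g1 g2 g3 : D3, Xi g2 g3 + Xi (g1 * g2) g3 + Xi g1 (g2 * g3) + Xi g1 g2 = 0 := by
  decide
end

section
/- Let H be the group 16Γ₂c₂ on 𝔽₂⁴ with multiplication (a₁,b₁,c₁,d₁)·(a₂,b₂,c₂,d₂) = (a₁+a₂, b₁+b₂, c₁+c₂+b₁a₂+b₁b₂, d₁+d₂+a₁a₂). Define x : H² → 𝔽₂ by x(g₁,g₂) = d₁d₂ + a₁a₂d₂ + a₁d₁a₂. Then x is a 2-cocycle: for all g₁,g₂,g₃ ∈ H, x(g₂,g₃) + x(g₁g₂,g₃) + x(g₁,g₂g₃) + x(g₁,g₂) = 0. -/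
/-- Underlying set of the group `16Γ₂c₂`. -/
def H4 : Type := F2 × F2 × F2 × F2

instance : DecidableEq H4 := inferInstanceAs (DecidableEq (F2 × F2 × F2 × F2))
instance : Fintype H4 := inferInstanceAs (Fintype (F2 × F2 × F2 × F2))

/-- Multiplication of `16Γ₂c₂`. -/
def hmul : H4 → H4 → H4
  | (a1,b1,c1,d1), (a2,b2,c2,d2) =>
    (a1+a2, b1+b2, c1+c2+b1*a2+b1*b2, d1+d2+a1*a2)

/-- The group `16Γ₂c₂`. -/
instance : Group H4 where
  mul := hmul
  one := ((0,0,0,0) : H4)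
  inv := fun (x : F2 × F2 × F2 × F2) =>
    ((x.1, x.2.1, x.2.2.1 + x.2.1*x.1 + x.2.1*x.2.1, x.2.2.2 + x.1*x.1) : H4)
  mul_assoc := fun x y z => by
    obtain ⟨a1,b1,c1,d1⟩ := x; obtain ⟨a2,b2,c2,d2⟩ := y; obtain ⟨a3,b3,c3,d3⟩ := z
    show hmul (hmul _ _) _ = hmul _ (hmul _ _)
    simp only [hmul]
    exact Prod.ext (by ring) (Prod.ext (by ring) (Prod.ext (by ring) (by ring)))
  one_mul := by decide
  mul_one := by decide
  inv_mul_cancel := by decide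

def aH : H4 → F2 | (a,_,_,_) => a
def bH : H4 → F2 | (_,b,_,_) => b
def cH : H4 → F2 | (_,_,c,_) => c
def dH : H4 → F2 | (_,_,_,d) => d

def f4h : H4 := (0,0,0,1)

/-- The 2-cochain `x` on `16Γ₂c₂`. -/
def xcoc (g1 g2 : H4) : F2 :=
  dH g1 * dH g2 + aH g1 * aH g2 * dH g2 + aH g1 * dH g1 * aH g2

/-- `x` is a 2-cocycle on `16Γ₂c₂` with trivial 𝔽₂ coefficients. -/
theorem stmt_9 :
    ∀ g1 g2 g3 : H4,
      xcoc g2 g3 + xcoc (g1 * g2) g3 + xcoc g1 (g2 * g3) + xcoc g1 g2 = 0 := by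
  decide
end

section
/- Let G = 32Γ₃f on 𝔽₂⁵ with its explicit multiplication. For g = (a,b,c,d,e) ∈ G write ā(g)=a, b̄(g)=b, etc. Define x₁₂, w₁₂ : G² → 𝔽₂ by x₁₂(g₁,g₂) = d₁d₂+a₁a₂d₂+a₁d₁a₂ and w₁₂(g₁,g₂) = c₁c₂+b₁a₂c₂+b₁c₁a₂+b₁b₂c₂+b₁c₁b₂+c₁a₂+b₁a₂b₂. Define Y : G³ → 𝔽₂ by Y(g₁,g₂,g₃) = (x₁₂w₁₂ + (e₁+e₂)(x₁₂+w₁₂) + b₁c₁a₂ + b₁c₁a₂c₂ + b₁d₂ + c₁a₂c₂ + e₁a₂ + e₁e₂)·a₃ + x₁₂(g₁,g₂)·d₃. Then Y is a 3-cocycle: δY = 0, i.e. for all g₀,g₁,g₂,g₃ ∈ G, Y(g₁,g₂,g₃) + Y(g₀g₁,g₂,g₃) + Y(g₀,g₁g₂,g₃) + Y(g₀,g₁,g₂g₃) + Y(g₀,g₁,g₂) = 0. -/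
/-- Underlying set of the group `32Γ₃f`. -/
def G5 : Type := F2 × F2 × F2 × F2 × F2

instance : DecidableEq G5 := inferInstanceAs (DecidableEq (F2 × F2 × F2 × F2 × F2))
instance : Fintype G5 := inferInstanceAs (Fintype (F2 × F2 × F2 × F2 × F2))

/-- The deviation term ẽ. -/
def Ee (a1 b1 c1 d1 a2 b2 c2 d2 : F2) : F2 :=
  d1*d2+a1*a2*d2+a1*d1*a2+c1*c2+b1*b2*c2+b1*c1*b2+b1*a2*c2+b1*c1*a2+c1*a2+b1*a2*b2

/-- Multiplication of `32Γ₃f`. -/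
def gmul : G5 → G5 → G5
  | (a1,b1,c1,d1,e1), (a2,b2,c2,d2,e2) =>
    (a1+a2, b1+b2, c1+c2+b1*a2+b1*b2, d1+d2+a1*a2, e1+e2+Ee a1 b1 c1 d1 a2 b2 c2 d2)

def gone : G5 := (0,0,0,0,0)

def ginv : G5 → G5
  | (a,b,c,d,e) =>
    (a, b, c+b*a+b*b, d+a*a, e + Ee a b c d a b (c+b*a+b*b) (d+a*a))

private lemma Ee_assoc : ∀ a1 b1 c1 d1 a2 b2 c2 d2 a3 b3 c3 d3 : F2,
    Ee a1 b1 c1 d1 a2 b2 c2 d2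
      + Ee (a1+a2) (b1+b2) (c1+c2+b1*a2+b1*b2) (d1+d2+a1*a2) a3 b3 c3 d3
    = Ee a2 b2 c2 d2 a3 b3 c3 d3
      + Ee a1 b1 c1 d1 (a2+a3) (b2+b3) (c2+c3+b2*a3+b2*b3) (d2+d3+a2*a3) := by
  have h2 : ∀ x : F2, x^2 = x := by decide
  have h3 : ∀ x : F2, x^3 = x := by decide
  have htwo : (2 : F2) = 0 := rfl
  intro a1 b1 c1 d1 a2 b2 c2 d2 a3 b3 c3 d3
  simp only [Ee]
  ring_nf
  simp only [h2, h3, htwo, zero_mul, mul_zero, zero_add, add_zero]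
  linear_combination (a2*a3*b1) * htwo

private lemma gmul_assoc : ∀ x y z : G5, gmul (gmul x y) z = gmul x (gmul y z) := by
  rintro ⟨a1,b1,c1,d1,e1⟩ ⟨a2,b2,c2,d2,e2⟩ ⟨a3,b3,c3,d3,e3⟩
  simp only [gmul]
  refine Prod.ext (by ring) (Prod.ext (by ring) (Prod.ext (by ring)
    (Prod.ext (by ring) ?_)))
  linear_combination (Ee_assoc a1 b1 c1 d1 a2 b2 c2 d2 a3 b3 c3 d3 : _)

/-- The group `32Γ₃f`. -/
instance : Group G5 where
  mul := gmul
  one := gone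
  inv := ginv
  mul_assoc := gmul_assoc
  one_mul := by decide
  mul_one := by decide
  inv_mul_cancel := by decide

def f1 : G5 := (1,0,0,0,0)
def f2 : G5 := (0,1,0,0,0)
def f3 : G5 := (0,0,1,0,0)
def f4 : G5 := (0,0,0,1,0)
def f5 : G5 := (0,0,0,0,1)

def aG : G5 → F2 | (a,_,_,_,_) => a
def bG : G5 → F2 | (_,b,_,_,_) => b
def cG : G5 → F2 | (_,_,c,_,_) => c
def dG : G5 → F2 | (_,_,_,d,_) => d
def eG : G5 → F2 | (_,_,_,_,e) => e

def x12 (g1 g2 : G5) : F2 :=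
  dG g1 * dG g2 + aG g1 * aG g2 * dG g2 + aG g1 * dG g1 * aG g2

def w12 (g1 g2 : G5) : F2 :=
  cG g1 * cG g2 + bG g1 * aG g2 * cG g2 + bG g1 * cG g1 * aG g2
    + bG g1 * bG g2 * cG g2 + bG g1 * cG g1 * bG g2 + cG g1 * aG g2
    + bG g1 * aG g2 * bG g2

/-- The explicit 3-cochain `Y` on `32Γ₃f`. -/
def Y (g1 g2 g3 : G5) : F2 :=
  (x12 g1 g2 * w12 g1 g2 + (eG g1 + eG g2) * (x12 g1 g2 + w12 g1 g2)
      + bG g1 * cG g1 * aG g2 + bG g1 * cG g1 * aG g2 * cG g2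
      + bG g1 * dG g2 + cG g1 * aG g2 * cG g2 + eG g1 * aG g2
      + eG g1 * eG g2) * aG g3
    + x12 g1 g2 * dG g3

set_option maxHeartbeats 4000000 in
set_option maxRecDepth 100000 in
/-- `Y` is a 3-cocycle on `32Γ₃f` with trivial 𝔽₂ coefficients. -/
theorem stmt_12 :
    ∀ g0 g1 g2 g3 : G5,
      Y g1 g2 g3 + Y (g0 * g1) g2 g3 + Y g0 (g1 * g2) g3
        + Y g0 g1 (g2 * g3) + Y g0 g1 g2 = 0 := by
  have hsq : ∀ x : F2, x^2 = x := by decide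
  have htwo : (2 : F2) = (0 : F2) := rfl
  have hmul : ∀ x y : G5, x * y = gmul x y := fun _ _ => rfl
  rintro ⟨a0,b0,c0,d0,e0⟩ ⟨a1,b1,c1,d1,e1⟩ ⟨a2,b2,c2,d2,e2⟩ ⟨a3,b3,c3,d3,e3⟩
  show Y _ _ _ + Y (gmul _ _) _ _ + Y _ (gmul _ _) _ + Y _ _ (gmul _ _) + Y _ _ _ = 0
  simp only [Y, x12, w12, gmul, aG, bG, cG, dG, eG, Ee]
  linear_combination
    ((((((((a1*a2*d3 + (a1*a2*e2*a3 + a1*e1*a2*a3)) + (a1*d1*a2*d2*a3 + (a1*d1^2*a2*a3 + a1*c1*a2*c2*a3))) + ((a1*c1*a2^2*a3 + (a1*b1*a2*b2*c2*a3 + a1*b1*a2^2*c2*a3)) + ((a1*b1*a2^2*b2*a3 + a1*b1*c1*a2*b2*a3) + (a1*b1*c1*a2^2*a3 + a1^2*d1*d2*a3)))) + (((a1^2*d1*a2*a3 + (a1^3*d1*a2*a3 + e0*a1*a2*a3)) + ((d0*a1*a2*d2*a3 + (3:F2)*d0*a1*d1*a2*a3) + (d0*a1^2*d2*a3 + d0*a1^2*a2*a3)))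 + ((d0*a1^3*a2*a3 + (d0^2*a1*a2*a3 + c0*a1*a2*c2*a3)) + ((c0*a1*a2^2*a3 + c0*a1*c1*a2*a3) + (c0*a1*b1*a2*b2*a3 + c0*a1*b1*a2^2*a3))))) + ((((c0*a1^2*a2*a3 + (b0*a1*a2*b2*c2*a3 + b0*a1*a2^2*c2*a3)) + (b0*a1*a2^2*b2*a3 + (b0*a1*c1*a2*b2*a3 + b0*a1*c1*a2^2*a3))) + ((b0*a1*b1*a2*c2*a3 + (b0*a1*b1*a2^2*a3 + b0*a1*b1*c1*a2*a3)) + ((b0*a1*b1^2*a2*b2*a3 + b0*a1*b1^2*a2^2*a3) + (b0*a1^2*a2*c2*a3 + b0*a1^2*a2^2*a3)))) + (((b0*a1^2*c1*a2*a3 + (b0*a1^2*b1*a2*a3 + b0*a1^2*b1*a2*b2*a3)) + ((b0*a1^2*b1*a2^2*a3 + b0*c0*a1*a2*b2*a3) + (b0*c0*a1*a2^2*a3 + b0*c0*a1*b1*a2*a3))) + ((b0*c0*a1^2*a2*a3 + (b0^2*a1*b1*a2*b2*a3 + b0^2*a1*b1*a2^2*a3)) + ((b0^2*a1^2*a2*b2*a3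 + b0^2*a1^2*a2^2*a3) + (a0*a1^2*d1*a2*a3 + a0*d0*a1^2*a2*a3)))))) * hsq a0 + ((((((((b1*b2*e2*a3 + b1*a2*a3) + (b1*a2*e2*a3 + b1*a2*c2*a3)) + ((b1*e1*b2*a3 + b1*e1*a2*a3) + (b1*d1*b2*d2*a3 + (b1*d1*a2*d2*a3 + b1*c1*b2*c2*a3)))) + (((b1*c1*a2*c2*a3 + b1*c1*a2*b2*a3) + (b1*c1^2*b2*a3 + (b1*c1^2*a2*a3 + b1^2*c1*c2*a3))) + ((b1^2*c1*b2*a3 + (2:F2)*b1^2*c1*a2*a3) + (b1^3*c1*b2*a3 + (b1^3*c1*a2*a3 + a1*b2*e2*a3))))) + ((((a1*a2*a3 + a1*a2*e2*a3) + (a1*a2*c2*a3 + a1*e1*b2*a3)) + ((a1*e1*a2*a3 + a1*d1*b2*d2*a3) + (a1*d1*a2*d2*a3 + (a1*c1*b2*c2*a3 + a1*c1*a2*c2*a3)))) + (((a1*c1*a2*b2*a3 + a1*c1^2*b2*a3) + (a1*c1^2*a2*a3 + (a1*b1*b2*c2*a3 + a1*b1*a2*c2*a3))) + ((a1*b1*a2*b2*a3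 + a1*b1*a2*b2*d2*a3) + (a1*b1*a2^2*d2*a3 + (a1*b1*d1*a2*b2*a3 + a1*b1*d1*a2^2*a3)))))) + ((((((2:F2)*a1*b1*c1*c2*a3 + (3:F2)*a1*b1*c1*b2*a3) + ((5:F2)*a1*b1*c1*a2*a3 + a1*b1^2*c2*a3)) + ((a1*b1^2*b2*a3 + (2:F2)*a1*b1^2*a2*a3) + ((2:F2)*a1*b1^2*c1*b2*a3 + ((2:F2)*a1*b1^2*c1*a2*a3 + a1*b1^3*b2*a3)))) + (((a1*b1^3*a2*a3 + a1^2*a2*b2*d2*a3) + (a1^2*a2^2*d2*a3 + (a1^2*d1*a2*b2*a3 + a1^2*d1*a2^2*a3))) + ((a1^2*c1*c2*a3 + a1^2*c1*b2*a3) + ((2:F2)*a1^2*c1*a2*a3 + (a1^2*b1*c2*a3 + a1^2*b1*b2*a3))))) + (((((2:F2)*a1^2*b1*a2*a3 + a1^2*b1*c1*b2*a3) + (a1^2*b1*c1*a2*a3 + (a1^2*b1^2*b2*a3 + a1^2*b1^2*a2*a3))) + ((e0*b1*b2*a3 + e0*b1*a2*a3) + (e0*a1*b2*a3 + (e0*a1*a2*a3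 + d0*b1*b2*d2*a3)))) + (((d0*b1*a2*d2*a3 + d0*b1*d1*b2*a3) + (d0*b1*d1*a2*a3 + (d0*a1*b2*d2*a3 + d0*a1*a2*d2*a3))) + ((d0*a1*d1*b2*a3 + d0*a1*d1*a2*a3) + (d0*a1*b1*a2*b2*a3 + (d0*a1*b1*a2^2*a3 + d0*a1^2*a2*b2*a3))))))) + ((((((d0*a1^2*a2^2*a3 + c0*b1*b2*c2*a3) + (c0*b1*a2*c2*a3 + c0*b1*a2*b2*a3)) + (((3:F2)*c0*b1*c1*b2*a3 + (3:F2)*c0*b1*c1*a2*a3) + (c0*b1^2*c2*a3 + (c0*b1^2*b2*a3 + (2:F2)*c0*b1^2*a2*a3)))) + (((c0*b1^3*b2*a3 + c0*b1^3*a2*a3) + (c0*a1*b2*c2*a3 + (c0*a1*a2*c2*a3 + c0*a1*a2*b2*a3))) + (((3:F2)*c0*a1*c1*b2*a3 + (3:F2)*c0*a1*c1*a2*a3) + ((2:F2)*c0*a1*b1*c2*a3 + ((4:F2)*c0*a1*b1*b2*a3 + (6:F2)*c0*a1*b1*a2*a3))))) + (((((2:F2)*c0*a1*b1^2*b2*a3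 + (2:F2)*c0*a1*b1^2*a2*a3) + (c0*a1^2*c2*a3 + ((2:F2)*c0*a1^2*b2*a3 + (3:F2)*c0*a1^2*a2*a3))) + ((c0*a1^2*b1*b2*a3 + c0*a1^2*b1*a2*a3) + (c0^2*b1*b2*a3 + (c0^2*b1*a2*a3 + c0^2*a1*b2*a3)))) + (((c0^2*a1*a2*a3 + b0*b1^2*c1*b2*a3) + (b0*b1^2*c1*a2*a3 + ((2:F2)*b0*a1*b1*c1*b2*a3 + (2:F2)*b0*a1*b1*c1*a2*a3))) + ((b0*a1*b1^2*b2*a3 + b0*a1*b1^2*a2*a3) + (b0*a1^2*c1*b2*a3 + (b0*a1^2*c1*a2*a3 + b0*a1^2*b1*b2*a3)))))) + (((((b0*a1^2*b1*a2*a3 + b0*c0*b1^2*b2*a3) + (b0*c0*b1^2*a2*a3 + (2:F2)*b0*c0*a1*b1*b2*a3)) + (((2:F2)*b0*c0*a1*b1*a2*a3 + b0*c0*a1^2*b2*a3) + (b0*c0*a1^2*a2*a3 + (a0*b1*a2*b2*d2*a3 + a0*b1*a2^2*d2*a3)))) + (((a0*b1*d1*a2*b2*a3 + a0*b1*d1*a2^2*a3)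 + (a0*a1*a2*b2*d2*a3 + (a0*a1*a2^2*d2*a3 + a0*a1*d1*a2*b2*a3))) + ((a0*a1*d1*a2^2*a3 + a0*a1*b1*b2*d2*a3) + (a0*a1*b1*a2*d2*a3 + (a0*a1*b1*a2*b2*a3 + a0*a1*b1*a2^2*a3))))) + ((((a0*a1*b1*d1*b2*a3 + a0*a1*b1*d1*a2*a3) + (a0*a1^2*b2*d2*a3 + (a0*a1^2*a2*d2*a3 + a0*a1^2*a2*b2*a3))) + ((a0*a1^2*a2^2*a3 + a0*a1^2*d1*b2*a3) + (a0*a1^2*d1*a2*a3 + (a0*a1^2*b1*a2*b2*a3 + a0*a1^2*b1*a2^2*a3)))) + (((a0*a1^3*a2*b2*a3 + a0*a1^3*a2^2*a3) + (a0*d0*b1*a2*b2*a3 + (a0*d0*b1*a2^2*a3 + a0*d0*a1*a2*b2*a3))) + ((a0*d0*a1*a2^2*a3 + a0*d0*a1*b1*b2*a3) + (a0*d0*a1*b1*a2*a3 + (a0*d0*a1^2*b2*a3 + a0*d0*a1^2*a2*a3)))))))) * hsq b0 + ((((c1*c2*a3 + c1*a2*a3) + (b1*c1*b2*a3 + (b1*c1*a2*a3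 + a1*c2*a3))) + ((a1*a2*a3 + a1*b1*b2*a3) + (a1*b1*a2*a3 + (b0*c1*b2*a3 + b0*c1*a2*a3)))) + (((b0*b1*c2*a3 + b0*b1*b2*a3) + ((2:F2)*b0*b1*a2*a3 + (b0*b1^2*b2*a3 + b0*b1^2*a2*a3))) + ((b0*a1*c2*a3 + (2:F2)*b0*a1*b2*a3) + ((3:F2)*b0*a1*a2*a3 + (b0*a1*b1*b2*a3 + b0*a1*b1*a2*a3))))) * hsq c0)) + (((d1*d2*a3 + (a1*d1*a2*a3 + a0*d1*a2*a3)) + (a0*a1*d2*a3 + (a0*a1*a2*a3 + a0*a1^2*a2*a3))) * hsq d0 + ((((((((d0*a2^2*d2*a3 + d0*d1*a2^2*a3) + ((2:F2)*c0*a2*d2*a3 + (2:F2)*c0*d1*a2*a3)) + (((2:F2)*c0*d0*a2*a3 + (2:F2)*b0*a2*c2*d2*a3) + ((2:F2)*b0*a2*b2*d2*a3 + ((2:F2)*b0*a2^2*d2*a3 + (2:F2)*b0*d1*a2*c2*a3)))) + ((((2:F2)*b0*d1*a2*b2*a3 + (2:F2)*b0*d1*a2^2*a3) + (b0*c1*c2*a3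 + b0*c1*b2*a3)) + (((2:F2)*b0*c1*a2*a3 + (2:F2)*b0*c1*a2*d2*a3) + ((2:F2)*b0*c1*d1*a2*a3 + (b0*b1*c2*a3 + b0*b1*b2*a3))))) + (((((2:F2)*b0*b1*a2*a3 + (2:F2)*b0*b1*a2*d2*a3) + ((2:F2)*b0*b1*a2*b2*d2*a3 + (2:F2)*b0*b1*a2^2*d2*a3)) + (((2:F2)*b0*b1*d1*a2*a3 + (2:F2)*b0*b1*d1*a2*b2*a3) + ((2:F2)*b0*b1*d1*a2^2*a3 + (b0*b1*c1*b2*a3 + b0*b1*c1*a2*a3)))) + (((b0*b1^2*b2*a3 + b0*b1^2*a2*a3) + ((2:F2)*b0*d0*a2*c2*a3 + (2:F2)*b0*d0*a2*b2*a3)) + (((2:F2)*b0*d0*a2^2*a3 + (2:F2)*b0*d0*c1*a2*a3) + ((2:F2)*b0*d0*b1*a2*a3 + ((2:F2)*b0*d0*b1*a2*b2*a3 + (2:F2)*b0*d0*b1*a2^2*a3)))))) + ((((((2:F2)*b0*c0*c2*a3 + (2:F2)*b0*c0*b2*a3) + ((4:F2)*b0*c0*a2*a3 + (2:F2)*b0*c0*a2*d2*a3))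 + (((2:F2)*b0*c0*d1*a2*a3 + (2:F2)*b0*c0*b1*b2*a3) + ((2:F2)*b0*c0*b1*a2*a3 + ((2:F2)*b0*c0*d0*a2*a3 + (2:F2)*a0*a2*d3)))) + ((((2:F2)*a0*a2*e2*a3 + a0*a2*d2^2*a3) + (a0*a2^2*d2*a3 + a0*a2^3*d2*a3)) + (((2:F2)*a0*e1*a2*a3 + a0*d1*d2*a3) + ((2:F2)*a0*d1*a2*a3 + ((4:F2)*a0*d1*a2*d2*a3 + a0*d1*a2^2*a3))))) + ((((a0*d1*a2^3*a3 + (2:F2)*a0*d1^2*a2*a3) + ((2:F2)*a0*c1*a2*c2*a3 + (2:F2)*a0*c1*a2^2*a3)) + (((2:F2)*a0*b1*a2*b2*c2*a3 + (2:F2)*a0*b1*a2^2*c2*a3) + ((2:F2)*a0*b1*a2^2*b2*a3 + ((2:F2)*a0*b1*c1*a2*b2*a3 + (2:F2)*a0*b1*c1*a2^2*a3)))) + (((a0*a1*a2^2*d2*a3 + a0*a1*d1*a2*a3) + (a0*a1*d1*a2^2*a3 + (2:F2)*a0*e0*a2*a3)) + ((a0*d0*d2*a3 + (3:F2)*a0*d0*a2*a3)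 + ((2:F2)*a0*d0*a2*d2*a3 + ((4:F2)*a0*d0*d1*a2*a3 + a0*d0*a1*a2*a3))))))) + (((((((2:F2)*a0*c0*d2*a3 + (3:F2)*a0*c0*a2*a3) + ((2:F2)*a0*c0*a2*c2*a3 + (3:F2)*a0*c0*a2^2*a3)) + (((2:F2)*a0*c0*d1*a3 + (2:F2)*a0*c0*d1*a2) + ((2:F2)*a0*c0*c1*a2*a3 + ((2:F2)*a0*c0*b1*a2*b2*a3 + (2:F2)*a0*c0*b1*a2^2*a3)))) + ((((2:F2)*a0*c0*a1*a2*a3 + (2:F2)*a0*c0*d0*a3) + ((2:F2)*a0*c0*d0*a2 + (2:F2)*a0*b0*c2*d2*a3)) + (((2:F2)*a0*b0*b2*d2*a3 + (2:F2)*a0*b0*a2*d2*a3) + ((3:F2)*a0*b0*a2*c2*a3 + ((3:F2)*a0*b0*a2*b2*a3 + (2:F2)*a0*b0*a2*b2*c2*a3))))) + (((((4:F2)*a0*b0*a2^2*a3 + (3:F2)*a0*b0*a2^2*c2*a3) + ((3:F2)*a0*b0*a2^2*b2*a3 + (2:F2)*a0*b0*d1*c2*a3)) + (((2:F2)*a0*b0*d1*b2*a3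 + (2:F2)*a0*b0*d1*a2*a3) + ((2:F2)*a0*b0*c1*d2*a3 + ((3:F2)*a0*b0*c1*a2*a3 + (2:F2)*a0*b0*c1*a2*b2*a3)))) + ((((3:F2)*a0*b0*c1*a2^2*a3 + (2:F2)*a0*b0*c1*d1*a3) + ((2:F2)*a0*b0*c1*d1*a2 + (2:F2)*a0*b0*b1*d2*a3)) + (((2:F2)*a0*b0*b1*b2*d2*a3 + (3:F2)*a0*b0*b1*a2*a3) + ((2:F2)*a0*b0*b1*a2*d2*a3 + ((2:F2)*a0*b0*b1*a2*c2*a3 + (4:F2)*a0*b0*b1*a2*b2*a3)))))) + (((((a0*b0*b1*a2*b2^2*a3 + (7:F2)*a0*b0*b1*a2^2*a3) + ((3:F2)*a0*b0*b1*a2^2*b2*a3 + (2:F2)*a0*b0*b1*a2^3*a3)) + (((2:F2)*a0*b0*b1*d1*a3 + (2:F2)*a0*b0*b1*d1*b2*a3) + ((2:F2)*a0*b0*b1*d1*a2 + ((2:F2)*a0*b0*b1*d1*a2*a3 + (2:F2)*a0*b0*b1*c1*a2*a3)))) + ((((2:F2)*a0*b0*b1^2*a2*b2*a3 + (2:F2)*a0*b0*b1^2*a2^2*a3)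 + ((2:F2)*a0*b0*a1*a2*c2*a3 + (2:F2)*a0*b0*a1*a2*b2*a3)) + (((2:F2)*a0*b0*a1*a2^2*a3 + (2:F2)*a0*b0*a1*c1*a2*a3) + ((2:F2)*a0*b0*a1*b1*a2*a3 + ((2:F2)*a0*b0*a1*b1*a2*b2*a3 + (2:F2)*a0*b0*a1*b1*a2^2*a3))))) + (((((2:F2)*a0*b0*d0*c2*a3 + (2:F2)*a0*b0*d0*b2*a3) + ((2:F2)*a0*b0*d0*a2*a3 + (2:F2)*a0*b0*d0*c1*a3)) + (((2:F2)*a0*b0*d0*c1*a2 + (2:F2)*a0*b0*d0*b1*a3) + ((2:F2)*a0*b0*d0*b1*b2*a3 + ((2:F2)*a0*b0*d0*b1*a2 + (2:F2)*a0*b0*d0*b1*a2*a3)))) + ((((2:F2)*a0*b0*c0*d2*a3 + (3:F2)*a0*b0*c0*a2*a3) + ((2:F2)*a0*b0*c0*a2*b2*a3 + ((3:F2)*a0*b0*c0*a2^2*a3 + (2:F2)*a0*b0*c0*d1*a3))) + (((2:F2)*a0*b0*c0*d1*a2 + (2:F2)*a0*b0*c0*b1*a2*a3) + ((2:F2)*a0*b0*c0*a1*a2*a3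 + ((2:F2)*a0*b0*c0*d0*a3 + (2:F2)*a0*b0*c0*d0*a2)))))))) * hsq a1 + ((((((c0*b2^2*c2*a3 + ((2:F2)*c0*a2*b2*c2*a3 + c0*a2*b2^2*a3)) + ((c0*a2^2*c2*a3 + c0*a2^2*b2*a3) + (c0*c1*b2^2*a3 + (2:F2)*c0*c1*a2*b2*a3))) + ((c0*c1*a2^2*a3 + ((2:F2)*b0*b2*e2*a3 + b0*b2*c2^2*a3)) + ((b0*b2^2*c2*a3 + b0*b2^3*c2*a3) + (b0*a2*a3 + (2:F2)*b0*a2*e2*a3)))) + (((b0*a2*c2*a3 + (b0*a2*c2^2*a3 + (4:F2)*b0*a2*b2*c2*a3)) + ((b0*a2*b2^2*a3 + (3:F2)*b0*a2*b2^2*c2*a3) + (b0*a2*b2^3*a3 + (2:F2)*b0*a2^2*c2*a3))) + (((2:F2)*b0*a2^2*b2*a3 + ((3:F2)*b0*a2^2*b2*c2*a3 + (2:F2)*b0*a2^2*b2^2*a3)) + ((b0*a2^3*c2*a3 + b0*a2^3*b2*a3) + ((2:F2)*b0*e1*b2*a3 + (2:F2)*b0*e1*a2*a3))))) + (((((2:F2)*b0*d1*b2*d2*a3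 + ((2:F2)*b0*d1*a2*d2*a3 + b0*c1*c2*a3)) + (((2:F2)*b0*c1*b2*a3 + (4:F2)*b0*c1*b2*c2*a3) + (b0*c1*b2^2*a3 + b0*c1*b2^3*a3))) + (((3:F2)*b0*c1*a2*a3 + ((4:F2)*b0*c1*a2*c2*a3 + (6:F2)*b0*c1*a2*b2*a3)) + (((3:F2)*b0*c1*a2*b2^2*a3 + (3:F2)*b0*c1*a2^2*a3) + ((3:F2)*b0*c1*a2^2*b2*a3 + b0*c1*a2^3*a3)))) + ((((2:F2)*b0*c1^2*b2*a3 + ((2:F2)*b0*c1^2*a2*a3 + b0*b1*b2^2*c2*a3)) + (((2:F2)*b0*b1*a2*b2*c2*a3 + b0*b1*a2*b2^2*a3) + (b0*b1*a2^2*c2*a3 + b0*b1*a2^2*b2*a3))) + ((b0*b1*c1*b2*a3 + (b0*b1*c1*b2^2*a3 + b0*b1*c1*a2*a3)) + (((2:F2)*b0*b1*c1*a2*b2*a3 + b0*b1*c1*a2^2*a3) + (b0*a1*c2*a3 + (3:F2)*b0*a1*b2*a3)))))) + ((((((2:F2)*b0*a1*b2*c2*a3 + (b0*a1*b2^2*c2*a3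 + (4:F2)*b0*a1*a2*a3)) + (((2:F2)*b0*a1*a2*c2*a3 + (2:F2)*b0*a1*a2*b2*a3) + ((2:F2)*b0*a1*a2*b2*d2*a3 + (2:F2)*b0*a1*a2*b2*c2*a3))) + ((b0*a1*a2*b2^2*a3 + ((2:F2)*b0*a1*a2^2*d2*a3 + b0*a1*a2^2*c2*a3)) + ((b0*a1*a2^2*b2*a3 + (2:F2)*b0*a1*d1*a2*b2*a3) + ((2:F2)*b0*a1*d1*a2^2*a3 + (4:F2)*b0*a1*c1*b2*a3)))) + (((b0*a1*c1*b2^2*a3 + ((4:F2)*b0*a1*c1*a2*a3 + (2:F2)*b0*a1*c1*a2*b2*a3)) + ((b0*a1*c1*a2^2*a3 + b0*a1*b1*b2*a3) + (b0*a1*b1*a2*a3 + (2:F2)*b0*e0*b2*a3))) + (((2:F2)*b0*e0*a2*a3 + ((2:F2)*b0*d0*b2*d2*a3 + (2:F2)*b0*d0*a2*d2*a3)) + (((2:F2)*b0*d0*d1*b2*a3 + (2:F2)*b0*d0*d1*a2*a3) + ((2:F2)*b0*d0*a1*a2*b2*a3 + (2:F2)*b0*d0*a1*a2^2*a3)))))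 + ((((b0*c0*c2*a3 + ((3:F2)*b0*c0*b2*a3 + (2:F2)*b0*c0*b2*c2*a3)) + (((4:F2)*b0*c0*a2*a3 + (2:F2)*b0*c0*a2*c2*a3) + ((2:F2)*b0*c0*a2*b2*a3 + (4:F2)*b0*c0*c1*b2*a3))) + (((4:F2)*b0*c0*c1*a2*a3 + (b0*c0*b1*b2*a3 + b0*c0*b1*a2*a3)) + (((4:F2)*b0*c0*a1*b2*a3 + (4:F2)*b0*c0*a1*a2*a3) + ((2:F2)*a0*b0*a2*b2*d2*a3 + (2:F2)*a0*b0*a2^2*d2*a3)))) + ((((2:F2)*a0*b0*d1*a2*b2*a3 + ((2:F2)*a0*b0*d1*a2^2*a3 + (2:F2)*a0*b0*a1*b2*d2*a3)) + (((2:F2)*a0*b0*a1*a2*d2*a3 + (3:F2)*a0*b0*a1*a2*b2*a3) + ((3:F2)*a0*b0*a1*a2^2*a3 + a0*b0*a1*a2^2*b2*a3))) + ((a0*b0*a1*a2^3*a3 + ((2:F2)*a0*b0*a1*d1*b2*a3 + (2:F2)*a0*b0*a1*d1*a2*a3)) + (((2:F2)*a0*b0*d0*a2*b2*a3 + (2:F2)*a0*b0*d0*a2^2*a3)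 + ((2:F2)*a0*b0*d0*a1*b2*a3 + (2:F2)*a0*b0*d0*a1*a2*a3))))))) * hsq b1))) + (((((((2:F2)*c0*c2*a3 + (2:F2)*c0*a2*a3) + ((2:F2)*c0*b1*b2*a3 + ((2:F2)*c0*b1*a2*a3 + b0*b2*c2*a3))) + ((b0*a2*c2*a3 + b0*a2*b2*a3) + (b0*a2^2*a3 + ((2:F2)*b0*b1*c2*a3 + (3:F2)*b0*b1*b2*a3)))) + (((b0*b1*b2^2*a3 + (5:F2)*b0*b1*a2*a3) + ((2:F2)*b0*b1*a2*b2*a3 + (b0*b1*a2^2*a3 + (2:F2)*b0*a1*c2*a3))) + ((b0*a1*b2*a3 + ((3:F2)*b0*a1*a2*a3 + (2:F2)*b0*a1*b1*b2*a3)) + ((2:F2)*b0*a1*b1*a2*a3 + (b0*c0*b2*a3 + b0*c0*a2*a3))))) * hsq c1 + ((((2:F2)*d0*d2*a3 + ((2:F2)*d0*a1*a2*a3 + a0*a2*d2*a3)) + (((2:F2)*a0*a1*d2*a3 + (3:F2)*a0*a1*a2*a3) + (a0*a1*a2^2*a3 + a0*d0*a2*a3))) * hsq d1 + ((((((((2:F2)*a1*c1*d2*a3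 + (2:F2)*a1*c1*d1*a3) + ((2:F2)*a1*b1*c2*d2*a3 + ((2:F2)*a1*b1*b2*d2*a3 + (2:F2)*a1*b1*d1*c2*a3))) + (((2:F2)*a1*b1*d1*b2*a3 + (2:F2)*a1*b1*c1*d2*a3) + ((2:F2)*a1*b1*c1*d1*a3 + (d0*a1*d2*a3 + d0*a1*d1*a3)))) + ((((2:F2)*d0*a1*c1*a3 + (2:F2)*d0*a1*b1*c2*a3) + ((2:F2)*d0*a1*b1*b2*a3 + ((2:F2)*d0*a1*b1*c1*a3 + c0*c1*a3))) + ((c0*b1*a3 + ((2:F2)*c0*b1*c2*a3 + (2:F2)*c0*b1*b2*a3)) + ((3:F2)*c0*b1*c1*a3 + ((2:F2)*c0*a1*d2*a3 + (2:F2)*c0*a1*d1*a3))))) + (((((2:F2)*c0*a1*b1*d2*a3 + (2:F2)*c0*a1*b1*d1*a3) + ((2:F2)*c0*d0*a1*a3 + ((2:F2)*c0*d0*a1*b1*a3 + b0*c1*a3))) + ((b0*c1*c2*a3 + (b0*c1*b2*a3 + b0*b1*e2*a3)) + ((3:F2)*b0*b1*c2*a3 + (b0*b1*c2^2*a3 +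 (3:F2)*b0*b1*b2*a3)))) + ((((5:F2)*b0*b1*b2*c2*a3 + (3:F2)*b0*b1*b2^2*a3) + (b0*b1*a2*c2*a3 + (b0*b1*a2*b2*a3 + b0*b1*e1*a3))) + ((b0*b1*d1*d2*a3 + ((7:F2)*b0*b1*c1*a3 + (3:F2)*b0*b1*c1*c2*a3)) + ((7:F2)*b0*b1*c1*b2*a3 + ((2:F2)*b0*b1*c1*a2*a3 + (2:F2)*b0*a1*d2*a3)))))) + ((((((2:F2)*b0*a1*c2*d2*a3 + (2:F2)*b0*a1*b2*d2*a3) + ((2:F2)*b0*a1*d1*a3 + ((2:F2)*b0*a1*d1*c2*a3 + (2:F2)*b0*a1*d1*b2*a3))) + (((2:F2)*b0*a1*c1*d2*a3 + (2:F2)*b0*a1*c1*d1*a3) + ((8:F2)*b0*a1*b1*d2*a3 + (b0*a1*b1*c2*a3 + b0*a1*b1*b2*a3)))) + ((((2:F2)*b0*a1*b1*b2*d2*a3 + b0*a1*b1*a2*d2*a3) + ((8:F2)*b0*a1*b1*d1*a3 + ((2:F2)*b0*a1*b1*d1*b2*a3 + b0*a1*b1*d1*a2*a3))) + (((2:F2)*b0*a1*b1*c1*a3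 + (b0*e0*b1*a3 + b0*d0*b1*d2*a3)) + (b0*d0*b1*d1*a3 + ((2:F2)*b0*d0*a1*a3 + (2:F2)*b0*d0*a1*c2*a3))))) + (((((2:F2)*b0*d0*a1*b2*a3 + (2:F2)*b0*d0*a1*c1*a3) + ((8:F2)*b0*d0*a1*b1*a3 + ((2:F2)*b0*d0*a1*b1*b2*a3 + b0*d0*a1*b1*a2*a3))) + ((b0*c0*c1*a3 + (b0*c0*b1*a3 + b0*c0*b1*c2*a3)) + (b0*c0*b1*b2*a3 + (b0*c0*b1*c1*a3 + (2:F2)*b0*c0*a1*d2*a3)))) + ((((2:F2)*b0*c0*a1*d1*a3 + (2:F2)*b0*c0*d0*a1*a3) + ((2:F2)*a0*c1*d2*a3 + ((2:F2)*a0*c1*d1*a3 + (2:F2)*a0*b1*c2*d2*a3))) + (((2:F2)*a0*b1*b2*d2*a3 + ((2:F2)*a0*b1*d1*c2*a3 + (2:F2)*a0*b1*d1*b2*a3)) + ((2:F2)*a0*b1*c1*d2*a3 + ((2:F2)*a0*b1*c1*d1*a3 + a0*a1*d3))))))) + ((((((a0*a1*e2*a3 + (2:F2)*a0*a1*d2*a3)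 + (a0*a1*d2^2*a3 + (a0*a1*a2*d2*a3 + a0*a1*e1*a3))) + (((3:F2)*a0*a1*d1*a3 + (3:F2)*a0*a1*d1*d2*a3) + (a0*a1*d1*a2*a3 + ((4:F2)*a0*a1*c1*a3 + a0*a1*c1*c2*a3)))) + (((a0*a1*c1*a2*a3 + (4:F2)*a0*a1*b1*c2*a3) + ((4:F2)*a0*a1*b1*b2*a3 + (a0*a1*b1*b2*c2*a3 + a0*a1*b1*a2*c2*a3))) + ((a0*a1*b1*a2*b2*a3 + ((4:F2)*a0*a1*b1*c1*a3 + a0*a1*b1*c1*b2*a3)) + (a0*a1*b1*c1*a2*a3 + (a0*e0*a1*a3 + (2:F2)*a0*d0*c1*a3))))) + (((((2:F2)*a0*d0*b1*c2*a3 + (2:F2)*a0*d0*b1*b2*a3) + ((2:F2)*a0*d0*b1*c1*a3 + (a0*d0*a1*d2*a3 + a0*d0*a1*d1*a3))) + (((2:F2)*a0*c0*d2*a3 + ((2:F2)*a0*c0*d1*a3 + (2:F2)*a0*c0*b1*d2*a3)) + ((2:F2)*a0*c0*b1*d1*a3 + ((5:F2)*a0*c0*a1*a3 + a0*c0*a1*c2*a3))))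 + (((a0*c0*a1*a2*a3 + a0*c0*a1*c1*a3) + ((4:F2)*a0*c0*a1*b1*a3 + (a0*c0*a1*b1*b2*a3 + a0*c0*a1*b1*a2*a3))) + (((2:F2)*a0*c0*d0*a3 + ((2:F2)*a0*c0*d0*b1*a3 + (2:F2)*a0*b0*c2*d2*a3)) + ((2:F2)*a0*b0*b2*d2*a3 + ((2:F2)*a0*b0*d1*c2*a3 + (2:F2)*a0*b0*d1*b2*a3)))))) + ((((((2:F2)*a0*b0*c1*d2*a3 + (2:F2)*a0*b0*c1*d1*a3) + ((6:F2)*a0*b0*b1*d2*a3 + ((2:F2)*a0*b0*b1*b2*d2*a3 + a0*b0*b1*a2*d2*a3))) + (((6:F2)*a0*b0*b1*d1*a3 + ((2:F2)*a0*b0*b1*d1*b2*a3 + a0*b0*b1*d1*a2*a3)) + ((4:F2)*a0*b0*a1*a3 + ((2:F2)*a0*b0*a1*d2*a3 + (5:F2)*a0*b0*a1*c2*a3)))) + ((((5:F2)*a0*b0*a1*b2*a3 + a0*b0*a1*b2*c2*a3) + (a0*b0*a1*a2*c2*a3 + (a0*b0*a1*a2*b2*a3 + (2:F2)*a0*b0*a1*d1*a3)))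 + (((5:F2)*a0*b0*a1*c1*a3 + (a0*b0*a1*c1*b2*a3 + a0*b0*a1*c1*a2*a3)) + ((17:F2)*a0*b0*a1*b1*a3 + ((3:F2)*a0*b0*a1*b1*d2*a3 + a0*b0*a1*b1*c2*a3))))) + (((((6:F2)*a0*b0*a1*b1*b2*a3 + a0*b0*a1*b1*b2^2*a3) + ((5:F2)*a0*b0*a1*b1*a2*a3 + ((2:F2)*a0*b0*a1*b1*a2*b2*a3 + a0*b0*a1*b1*a2^2*a3))) + (((3:F2)*a0*b0*a1*b1*d1*a3 + (a0*b0*a1*b1*c1*a3 + (2:F2)*a0*b0*d0*c2*a3)) + ((2:F2)*a0*b0*d0*b2*a3 + ((2:F2)*a0*b0*d0*c1*a3 + (6:F2)*a0*b0*d0*b1*a3)))) + ((((2:F2)*a0*b0*d0*b1*b2*a3 + a0*b0*d0*b1*a2*a3) + ((2:F2)*a0*b0*d0*a1*a3 + ((3:F2)*a0*b0*d0*a1*b1*a3 + (2:F2)*a0*b0*c0*d2*a3))) + (((2:F2)*a0*b0*c0*d1*a3 + ((5:F2)*a0*b0*c0*a1*a3 + a0*b0*c0*a1*b2*a3)) +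 (a0*b0*c0*a1*a2*a3 + (a0*b0*c0*a1*b1*a3 + (2:F2)*a0*b0*c0*d0*a3)))))))) * hsq a2)) + (((((((c0*b1*c2*a3 + c0*b1*a2*a3) + (c0*b1*c1*a3 + b0*b1*e2*a3)) + (((2:F2)*b0*b1*c2*a3 + b0*b1*c2^2*a3) + (b0*b1*b2*c2*a3 + (5:F2)*b0*b1*a2*a3))) + ((((5:F2)*b0*b1*a2*c2*a3 + b0*b1*a2*b2*a3) + (b0*b1*e1*a3 + b0*b1*d1*d2*a3)) + (((3:F2)*b0*b1*c1*a3 + (3:F2)*b0*b1*c1*c2*a3) + (b0*b1*c1*b2*a3 + ((6:F2)*b0*b1*c1*a2*a3 + (2:F2)*b0*a1*b1*c2*a3))))) + (((((2:F2)*b0*a1*b1*a2*a3 + b0*a1*b1*a2*d2*a3) + (b0*a1*b1*d1*a2*a3 + (2:F2)*b0*a1*b1*c1*a3)) + ((b0*e0*b1*a3 + b0*d0*b1*d2*a3) + (b0*d0*b1*d1*a3 + (b0*d0*a1*b1*a2*a3 + b0*c0*b1*c2*a3)))) + (((b0*c0*b1*a2*a3 + b0*c0*b1*c1*a3) + (a0*b0*b1*a2*d2*a3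 + a0*b0*b1*d1*a2*a3)) + ((a0*b0*a1*b1*d2*a3 + (2:F2)*a0*b0*a1*b1*a2*a3) + (a0*b0*a1*b1*d1*a3 + (a0*b0*d0*b1*a2*a3 + a0*b0*d0*a1*b1*a3)))))) * hsq b2 + (((c0*c1*a3 + (c0*b1*b2*a3 + c0*b1*a2*a3)) + (b0*c1*b2*a3 + (b0*c1*a2*a3 + (2:F2)*b0*b1*b2*a3))) + (((2:F2)*b0*b1*a2*a3 + ((2:F2)*b0*b1*a2*b2*a3 + b0*b1*c1*a3)) + (b0*a1*c1*a3 + (b0*a1*b1*b2*a3 + b0*a1*b1*a2*a3)))) * hsq c2) + (((d0*d1*a3 + d0*a1*a2*a3) + (a0*d1*a2*a3 + ((2:F2)*a0*a1*a2*a3 + a0*a1*d1*a3))) * hsq d2 + (((((((((e1*e2*a3 + e1*a2*a3) + (d1*d2*d3 + (d1*d2*e2*a3 + d1*e1*d2*a3))) + ((c1*c2*e2*a3 + (c1*a2*e2*a3 + c1*a2*c2*a3)) + (c1*e1*c2*a3 + (c1*e1*a2*a3 + c1*d1*c2*d2*a3)))) + (((c1*d1*a2*d2*a3 + b1*d2*a3)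 + (b1*b2*c2*e2*a3 + (b1*a2*c2*e2*a3 + b1*a2*b2*e2*a3))) + ((b1*e1*b2*c2*a3 + (b1*e1*a2*c2*a3 + b1*e1*a2*b2*a3)) + (b1*d1*b2*c2*d2*a3 + (b1*d1*a2*c2*d2*a3 + b1*d1*a2*b2*d2*a3))))) + ((((b1*c1*b2*e2*a3 + b1*c1*a2*a3) + (b1*c1*a2*e2*a3 + (b1*c1*a2*c2*a3 + b1*c1*e1*b2*a3))) + ((b1*c1*e1*a2*a3 + (b1*c1*d1*b2*d2*a3 + b1*c1*d1*a2*d2*a3)) + (a1*a2*d2*d3 + (a1*a2*d2*e2*a3 + a1*e1*a2*d2*a3)))) + (((a1*d1*a2*d3 + a1*d1*a2*e2*a3) + (a1*d1*e1*a2*a3 + (a1*c1*a2*d2*a3 + a1*c1*a2*c2*d2*a3))) + ((a1*c1*d1*a2*a3 + (a1*c1*d1*a2*c2*a3 + a1*b1*a2*c2*d2*a3)) + (a1*b1*a2*b2*d2*a3 + (a1*b1*a2*b2*c2*d2*a3 + a1*b1*d1*a2*c2*a3)))))) + (((((a1*b1*d1*a2*b2*a3 + a1*b1*d1*a2*b2*c2*a3)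 + (a1*b1*c1*a2*d2*a3 + (a1*b1*c1*a2*b2*d2*a3 + a1*b1*c1*d1*a2*a3))) + ((a1*b1*c1*d1*a2*b2*a3 + (e0*e2*a3 + e0*a2*a3)) + (e0*e1*a3 + (e0*e1*a2 + e0*d1*d2*a3)))) + (((e0*c1*c2*a3 + e0*c1*a2*a3) + (e0*b1*b2*c2*a3 + (e0*b1*a2*c2*a3 + e0*b1*a2*b2*a3))) + ((e0*b1*c1*b2*a3 + (e0*b1*c1*a2*a3 + e0*a1*a3)) + (e0*a1*a2 + (e0*a1*a2*d2*a3 + e0*a1*d1*a2*a3))))) + ((((d0*d2*d3 + d0*d2*e2*a3) + (d0*e1*d2*a3 + (d0*d1*d3 + d0*d1*e2*a3))) + ((d0*d1*d2 + ((2:F2)*d0*d1*d2*a3 + d0*d1*a2*a3)) + (d0*d1*e1*a3 + (d0*d1*e1*a2 + d0*c1*c2*d2*a3)))) + (((d0*c1*a2*d2*a3 + d0*c1*d1*c2*a3) + (d0*c1*d1*a2*a3 + (d0*b1*b2*c2*d2*a3 + d0*b1*a2*c2*d2*a3))) + ((d0*b1*a2*b2*d2*a3 + (d0*b1*d1*b2*c2*a3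 + d0*b1*d1*a2*c2*a3)) + (d0*b1*d1*a2*b2*a3 + (d0*b1*c1*b2*d2*a3 + d0*b1*c1*a2*d2*a3))))))) + ((((((d0*b1*c1*d1*b2*a3 + d0*b1*c1*d1*a2*a3) + (d0*a1*a2*d3 + (d0*a1*a2*e2*a3 + d0*a1*a2*d2*a3))) + ((d0*a1*e1*a2*a3 + ((2:F2)*d0*a1*d1*a2*a3 + (2:F2)*d0*a1*d1*a2*d2*a3)) + (d0*a1*c1*a2*a3 + (d0*a1*c1*a2*c2*a3 + d0*a1*b1*a2*c2*a3)))) + (((d0*a1*b1*a2*b2*a3 + d0*a1*b1*a2*b2*c2*a3) + (d0*a1*b1*c1*a2*a3 + (d0*a1*b1*c1*a2*b2*a3 + d0*e0*d2*a3))) + ((d0*e0*d1*a3 + (d0*e0*d1*a2 + d0*e0*a1*a2*a3)) + (c0*c2*e2*a3 + (c0*a2*e2*a3 + c0*a2*c2*a3))))) + ((((c0*e1*c2*a3 + c0*e1*a2*a3) + (c0*d1*c2*d2*a3 + (c0*d1*a2*d2*a3 + c0*c1*e2*a3))) + (((2:F2)*c0*c1*c2*a3 + ((3:F2)*c0*c1*a2*a3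 + c0*c1*a2*c2*a3)) + (c0*c1*e1*a3 + (c0*c1*e1*a2 + c0*c1*d1*d2*a3)))) + (((c0*b1*b2*e2*a3 + c0*b1*b2*c2*a3) + (c0*b1*a2*a3 + (c0*b1*a2*e2*a3 + (2:F2)*c0*b1*a2*c2*a3))) + (((2:F2)*c0*b1*a2*b2*a3 + ((2:F2)*c0*b1*a2*b2*c2*a3 + c0*b1*e1*b2*a3)) + (c0*b1*e1*a2*a3 + (c0*b1*d1*b2*d2*a3 + c0*b1*d1*a2*d2*a3)))))) + ((((((2:F2)*c0*b1*c1*b2*a3 + (2:F2)*c0*b1*c1*b2*c2*a3) + ((3:F2)*c0*b1*c1*a2*a3 + ((2:F2)*c0*b1*c1*a2*c2*a3 + (3:F2)*c0*b1*c1*a2*b2*a3))) + ((c0*a1*e2*a3 + (c0*a1*c2*a3 + c0*a1*a2*a3)) + ((2:F2)*c0*a1*a2*d2*a3 + (c0*a1*a2*c2*d2*a3 + c0*a1*e1*a3)))) + (((c0*a1*e1*a2 + c0*a1*d1*d2*a3) + ((2:F2)*c0*a1*d1*a2*a3 + (c0*a1*d1*a2*c2*a3 + c0*a1*c1*a3)))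 + ((c0*a1*c1*c2*a3 + (c0*a1*c1*a2 + c0*a1*c1*a2*a3)) + (c0*a1*c1*a2*d2*a3 + (c0*a1*c1*d1*a2*a3 + c0*a1*b1*b2*a3))))) + ((((c0*a1*b1*b2*c2*a3 + c0*a1*b1*a2*a3) + (c0*a1*b1*a2*d2*a3 + (c0*a1*b1*a2*c2*a3 + c0*a1*b1*a2*b2*a3))) + ((c0*a1*b1*a2*b2*d2*a3 + (c0*a1*b1*d1*a2*a3 + c0*a1*b1*d1*a2*b2*a3)) + (c0*a1*b1*c1*b2*a3 + (c0*a1*b1*c1*a2*a3 + c0*e0*c2*a3)))) + (((c0*e0*a2*a3 + c0*e0*c1*a3) + (c0*e0*c1*a2 + (c0*e0*b1*b2*a3 + c0*e0*b1*a2*a3))) + ((c0*e0*a1*a3 + (c0*e0*a1*a2 + c0*d0*c2*d2*a3)) + (c0*d0*a2*d2*a3 + (c0*d0*d1*c2*a3 + c0*d0*d1*a2*a3)))))))) + (((((((c0*d0*c1*d2*a3 + c0*d0*c1*d1*a3) + (c0*d0*c1*d1*a2 + (c0*d0*b1*b2*d2*a3 + c0*d0*b1*a2*d2*a3))) + ((c0*d0*b1*d1*b2*a3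 + (c0*d0*b1*d1*a2*a3 + c0*d0*a1*d2*a3)) + ((2:F2)*c0*d0*a1*a2*a3 + (c0*d0*a1*a2*c2*a3 + c0*d0*a1*d1*a3)))) + (((c0*d0*a1*d1*a2 + c0*d0*a1*c1*a2*a3) + (c0*d0*a1*b1*a2*a3 + (c0*d0*a1*b1*a2*b2*a3 + b0*d2*a3))) + ((b0*b2*c2*e2*a3 + (b0*a2*c2*e2*a3 + b0*a2*b2*e2*a3)) + (b0*e1*b2*c2*a3 + (b0*e1*a2*c2*a3 + b0*e1*a2*b2*a3))))) + ((((b0*d1*a3 + b0*d1*b2*c2*d2*a3) + (b0*d1*a2 + (b0*d1*a2*c2*d2*a3 + b0*d1*a2*b2*d2*a3))) + ((b0*c1*b2*e2*a3 + (b0*c1*b2*c2*a3 + b0*c1*a2*a3)) + (b0*c1*a2*e2*a3 + ((2:F2)*b0*c1*a2*c2*a3 + b0*c1*a2*b2*a3)))) + (((b0*c1*a2*b2*c2*a3 + b0*c1*e1*b2*a3) + (b0*c1*e1*a2*a3 + (b0*c1*d1*b2*d2*a3 + b0*c1*d1*a2*d2*a3))) + ((b0*b1*c2*e2*a3 + ((2:F2)*b0*b1*b2*e2*a3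 + (2:F2)*b0*b1*b2*c2*a3)) + (b0*b1*a2*a3 + ((3:F2)*b0*b1*a2*e2*a3 + (4:F2)*b0*b1*a2*c2*a3)))))) + ((((((4:F2)*b0*b1*a2*b2*a3 + b0*b1*a2*b2*e2*a3) + ((8:F2)*b0*b1*a2*b2*c2*a3 + (b0*b1*e1*c2*a3 + (2:F2)*b0*b1*e1*b2*a3))) + (((3:F2)*b0*b1*e1*a2*a3 + (b0*b1*e1*a2*b2*a3 + b0*b1*d1*c2*d2*a3)) + ((2:F2)*b0*b1*d1*b2*d2*a3 + ((3:F2)*b0*b1*d1*a2*d2*a3 + b0*b1*d1*a2*b2*d2*a3)))) + (((b0*b1*c1*e2*a3 + (2:F2)*b0*b1*c1*c2*a3) + ((4:F2)*b0*b1*c1*b2*a3 + ((4:F2)*b0*b1*c1*b2*c2*a3 + (8:F2)*b0*b1*c1*a2*a3))) + (((5:F2)*b0*b1*c1*a2*c2*a3 + ((11:F2)*b0*b1*c1*a2*b2*a3 + (3:F2)*b0*b1*c1*a2*b2*c2*a3)) + (b0*b1*c1*e1*a3 + (b0*b1*c1*e1*a2 + b0*b1*c1*d1*d2*a3))))) +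 ((((b0*a1*c2*e2*a3 + b0*a1*b2*e2*a3) + (b0*a1*a2*a3 + (b0*a1*a2*e2*a3 + b0*a1*a2*d2*a3))) + ((b0*a1*a2*c2*a3 + ((2:F2)*b0*a1*a2*c2*d2*a3 + (2:F2)*b0*a1*a2*b2*d2*a3)) + (b0*a1*a2*b2*c2*d2*a3 + (b0*a1*e1*c2*a3 + b0*a1*e1*b2*a3)))) + (((b0*a1*e1*a2*a3 + b0*a1*d1*c2*d2*a3) + (b0*a1*d1*b2*d2*a3 + (b0*a1*d1*a2*a3 + b0*a1*d1*a2*d2*a3))) + (((2:F2)*b0*a1*d1*a2*c2*a3 + ((2:F2)*b0*a1*d1*a2*b2*a3 + b0*a1*d1*a2*b2*c2*a3)) + (b0*a1*c1*e2*a3 + ((2:F2)*b0*a1*c1*c2*a3 + b0*a1*c1*b2*a3))))))) + ((((((b0*a1*c1*b2*c2*a3 + (3:F2)*b0*a1*c1*a2*a3) + ((2:F2)*b0*a1*c1*a2*d2*a3 + (b0*a1*c1*a2*c2*a3 + b0*a1*c1*a2*b2*a3))) + ((b0*a1*c1*a2*b2*d2*a3 + (b0*a1*c1*e1*a3 + b0*a1*c1*e1*a2))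 + (b0*a1*c1*d1*d2*a3 + ((2:F2)*b0*a1*c1*d1*a2*a3 + b0*a1*c1*d1*a2*b2*a3)))) + (((b0*a1*b1*e2*a3 + b0*a1*b1*c2*a3) + ((2:F2)*b0*a1*b1*b2*a3 + (b0*a1*b1*b2*e2*a3 + (3:F2)*b0*a1*b1*b2*c2*a3))) + (((4:F2)*b0*a1*b1*a2*a3 + (b0*a1*b1*a2*e2*a3 + (5:F2)*b0*a1*b1*a2*d2*a3)) + ((3:F2)*b0*a1*b1*a2*c2*a3 + (b0*a1*b1*a2*c2*d2*a3 + (3:F2)*b0*a1*b1*a2*b2*a3))))) + (((((4:F2)*b0*a1*b1*a2*b2*d2*a3 + (2:F2)*b0*a1*b1*a2*b2*c2*a3) + (b0*a1*b1*e1*a3 + (b0*a1*b1*e1*b2*a3 + b0*a1*b1*e1*a2))) + ((b0*a1*b1*e1*a2*a3 + (b0*a1*b1*d1*d2*a3 + b0*a1*b1*d1*b2*d2*a3)) + ((5:F2)*b0*a1*b1*d1*a2*a3 + (b0*a1*b1*d1*a2*d2*a3 + b0*a1*b1*d1*a2*c2*a3)))) + ((((4:F2)*b0*a1*b1*d1*a2*b2*a3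 + (2:F2)*b0*a1*b1*c1*c2*a3) + ((6:F2)*b0*a1*b1*c1*b2*a3 + ((2:F2)*b0*a1*b1*c1*b2*c2*a3 + (8:F2)*b0*a1*b1*c1*a2*a3))) + ((b0*a1*b1*c1*a2*d2*a3 + ((2:F2)*b0*a1*b1*c1*a2*c2*a3 + (3:F2)*b0*a1*b1*c1*a2*b2*a3)) + (b0*a1*b1*c1*d1*a2*a3 + (b0*e0*b2*c2*a3 + b0*e0*a2*c2*a3)))))) + (((((b0*e0*a2*b2*a3 + b0*e0*c1*b2*a3) + (b0*e0*c1*a2*a3 + (b0*e0*b1*c2*a3 + (2:F2)*b0*e0*b1*b2*a3))) + (((3:F2)*b0*e0*b1*a2*a3 + (b0*e0*b1*a2*b2*a3 + b0*e0*b1*c1*a3)) + (b0*e0*b1*c1*a2 + (b0*e0*a1*c2*a3 + b0*e0*a1*b2*a3)))) + (((b0*e0*a1*a2*a3 + b0*e0*a1*c1*a3) + (b0*e0*a1*c1*a2 + (b0*e0*a1*b1*a3 + b0*e0*a1*b1*b2*a3))) + ((b0*e0*a1*b1*a2 + (b0*e0*a1*b1*a2*a3 + b0*d0*b2*c2*d2*a3))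 + (b0*d0*a2*c2*d2*a3 + (b0*d0*a2*b2*d2*a3 + b0*d0*d1*b2*c2*a3))))) + ((((b0*d0*d1*a2*c2*a3 + b0*d0*d1*a2*b2*a3) + (b0*d0*c1*b2*d2*a3 + (b0*d0*c1*a2*d2*a3 + b0*d0*c1*d1*b2*a3))) + ((b0*d0*c1*d1*a2*a3 + (b0*d0*b1*c2*d2*a3 + (2:F2)*b0*d0*b1*b2*d2*a3)) + ((3:F2)*b0*d0*b1*a2*d2*a3 + (b0*d0*b1*a2*b2*d2*a3 + b0*d0*b1*d1*c2*a3)))) + ((((2:F2)*b0*d0*b1*d1*b2*a3 + (3:F2)*b0*d0*b1*d1*a2*a3) + (b0*d0*b1*d1*a2*b2*a3 + (b0*d0*b1*c1*d2*a3 + b0*d0*b1*c1*d1*a3))) + ((b0*d0*b1*c1*d1*a2 + (b0*d0*a1*c2*d2*a3 + b0*d0*a1*b2*d2*a3)) + (b0*d0*a1*a2*a3 + (b0*d0*a1*a2*d2*a3 + (2:F2)*b0*d0*a1*a2*c2*a3))))))))) + (((((((((2:F2)*b0*d0*a1*a2*b2*a3 + b0*d0*a1*a2*b2*c2*a3) +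 (b0*d0*a1*d1*c2*a3 + (b0*d0*a1*d1*b2*a3 + b0*d0*a1*d1*a2*a3))) + ((b0*d0*a1*c1*d2*a3 + ((2:F2)*b0*d0*a1*c1*a2*a3 + b0*d0*a1*c1*a2*b2*a3)) + (b0*d0*a1*c1*d1*a3 + (b0*d0*a1*c1*d1*a2 + b0*d0*a1*b1*d2*a3)))) + (((b0*d0*a1*b1*b2*d2*a3 + (5:F2)*b0*d0*a1*b1*a2*a3) + (b0*d0*a1*b1*a2*d2*a3 + (b0*d0*a1*b1*a2*c2*a3 + (4:F2)*b0*d0*a1*b1*a2*b2*a3))) + ((b0*d0*a1*b1*d1*a3 + (b0*d0*a1*b1*d1*b2*a3 + b0*d0*a1*b1*d1*a2)) + (b0*d0*a1*b1*d1*a2*a3 + (b0*d0*a1*b1*c1*a2*a3 + b0*c0*b2*e2*a3))))) + ((((b0*c0*a2*a3 + b0*c0*a2*e2*a3) + (b0*c0*a2*c2*a3 + (b0*c0*e1*b2*a3 + b0*c0*e1*a2*a3))) + ((b0*c0*d1*b2*d2*a3 + (b0*c0*d1*a2*d2*a3 + b0*c0*c1*b2*a3)) + (b0*c0*c1*b2*c2*a3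 + ((2:F2)*b0*c0*c1*a2*a3 + b0*c0*c1*a2*c2*a3)))) + (((b0*c0*c1*a2*b2*a3 + b0*c0*b1*e2*a3) + (b0*c0*b1*c2*a3 + ((2:F2)*b0*c0*b1*b2*a3 + (2:F2)*b0*c0*b1*b2*c2*a3))) + (((4:F2)*b0*c0*b1*a2*a3 + ((2:F2)*b0*c0*b1*a2*c2*a3 + (3:F2)*b0*c0*b1*a2*b2*a3)) + (b0*c0*b1*a2*b2*c2*a3 + (b0*c0*b1*e1*a3 + b0*c0*b1*e1*a2)))))) + (((((b0*c0*b1*d1*d2*a3 + (2:F2)*b0*c0*b1*c1*c2*a3) + ((4:F2)*b0*c0*b1*c1*b2*a3 + ((6:F2)*b0*c0*b1*c1*a2*a3 + b0*c0*b1*c1*a2*b2*a3))) + ((b0*c0*a1*a3 + (b0*c0*a1*e2*a3 + (2:F2)*b0*c0*a1*c2*a3)) + ((2:F2)*b0*c0*a1*b2*a3 + (b0*c0*a1*b2*c2*a3 + b0*c0*a1*a2)))) + ((((4:F2)*b0*c0*a1*a2*a3 + (2:F2)*b0*c0*a1*a2*d2*a3) + (b0*c0*a1*a2*c2*a3 +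 (b0*c0*a1*a2*b2*a3 + b0*c0*a1*a2*b2*d2*a3))) + ((b0*c0*a1*e1*a3 + (b0*c0*a1*e1*a2 + b0*c0*a1*d1*d2*a3)) + ((2:F2)*b0*c0*a1*d1*a2*a3 + (b0*c0*a1*d1*a2*b2*a3 + b0*c0*a1*c1*a3))))) + (((((2:F2)*b0*c0*a1*c1*c2*a3 + (2:F2)*b0*c0*a1*c1*b2*a3) + (b0*c0*a1*c1*a2 + ((4:F2)*b0*c0*a1*c1*a2*a3 + (2:F2)*b0*c0*a1*b1*c2*a3))) + (((6:F2)*b0*c0*a1*b1*b2*a3 + (b0*c0*a1*b1*b2*c2*a3 + (8:F2)*b0*c0*a1*b1*a2*a3)) + (b0*c0*a1*b1*a2*d2*a3 + (b0*c0*a1*b1*a2*c2*a3 + b0*c0*a1*b1*a2*b2*a3)))) + (((b0*c0*a1*b1*d1*a2*a3 + (2:F2)*b0*c0*a1*b1*c1*b2*a3) + ((2:F2)*b0*c0*a1*b1*c1*a2*a3 + (b0*c0*e0*b2*a3 + b0*c0*e0*a2*a3))) + ((b0*c0*e0*b1*a3 + (b0*c0*e0*b1*a2 + b0*c0*e0*a1*a3))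 + (b0*c0*e0*a1*a2 + (b0*c0*d0*b2*d2*a3 + b0*c0*d0*a2*d2*a3))))))) + ((((((b0*c0*d0*d1*b2*a3 + b0*c0*d0*d1*a2*a3) + (b0*c0*d0*b1*d2*a3 + (b0*c0*d0*b1*d1*a3 + b0*c0*d0*b1*d1*a2))) + ((b0*c0*d0*a1*d2*a3 + ((2:F2)*b0*c0*d0*a1*a2*a3 + b0*c0*d0*a1*a2*b2*a3)) + (b0*c0*d0*a1*d1*a3 + (b0*c0*d0*a1*d1*a2 + b0*c0*d0*a1*b1*a2*a3)))) + (((a0*a2*d2*d3 + a0*a2*d2*e2*a3) + (a0*e1*a2*d2*a3 + (a0*d1*a2*d3 + a0*d1*a2*e2*a3))) + ((a0*d1*a2*d2*a3 + (a0*d1*e1*a2*a3 + a0*c1*a2*d2*a3)) + (a0*c1*a2*c2*d2*a3 + (a0*c1*d1*a2*a3 + a0*c1*d1*a2*c2*a3))))) + ((((a0*b1*a2*c2*d2*a3 + a0*b1*a2*b2*d2*a3) + (a0*b1*a2*b2*c2*d2*a3 + (a0*b1*d1*a2*c2*a3 + a0*b1*d1*a2*b2*a3))) + ((a0*b1*d1*a2*b2*c2*a3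 + (a0*b1*c1*a2*d2*a3 + a0*b1*c1*a2*b2*d2*a3)) + (a0*b1*c1*d1*a2*a3 + (a0*b1*c1*d1*a2*b2*a3 + a0*a1*d2*d3)))) + (((a0*a1*d2*e2*a3 + (2:F2)*a0*a1*a2*d3) + ((2:F2)*a0*a1*a2*e2*a3 + ((2:F2)*a0*a1*a2*d2*a3 + a0*a1*e1*d2*a3))) + (((2:F2)*a0*a1*e1*a2*a3 + (a0*a1*d1*d3 + a0*a1*d1*e2*a3)) + (a0*a1*d1*d2 + ((2:F2)*a0*a1*d1*d2*a3 + (5:F2)*a0*a1*d1*a2*a3)))))) + ((((((4:F2)*a0*a1*d1*a2*d2*a3 + a0*a1*d1*e1*a3) + (a0*a1*d1*e1*a2 + (a0*a1*c1*c2*d2*a3 + (2:F2)*a0*a1*c1*a2*a3))) + ((a0*a1*c1*a2*d2*a3 + ((2:F2)*a0*a1*c1*a2*c2*a3 + a0*a1*c1*d1*c2*a3)) + (a0*a1*c1*d1*a2*a3 + (a0*a1*b1*b2*c2*d2*a3 + (2:F2)*a0*a1*b1*a2*c2*a3)))) + (((a0*a1*b1*a2*c2*d2*a3 + (2:F2)*a0*a1*b1*a2*b2*a3)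 + (a0*a1*b1*a2*b2*d2*a3 + ((2:F2)*a0*a1*b1*a2*b2*c2*a3 + a0*a1*b1*d1*b2*c2*a3))) + ((a0*a1*b1*d1*a2*c2*a3 + (a0*a1*b1*d1*a2*b2*a3 + a0*a1*b1*c1*b2*d2*a3)) + ((2:F2)*a0*a1*b1*c1*a2*a3 + (a0*a1*b1*c1*a2*d2*a3 + (2:F2)*a0*a1*b1*c1*a2*b2*a3))))) + ((((a0*a1*b1*c1*d1*b2*a3 + a0*a1*b1*c1*d1*a2*a3) + (a0*e0*a2*d2*a3 + (a0*e0*d1*a2*a3 + a0*e0*a1*d2*a3))) + (((2:F2)*a0*e0*a1*a2*a3 + (a0*e0*a1*d1*a3 + a0*e0*a1*d1*a2)) + (a0*d0*a2*d3 + (a0*d0*a2*e2*a3 + a0*d0*e1*a2*a3)))) + (((a0*d0*d1*a2*a3 + a0*d0*d1*a2*d2*a3) + (a0*d0*c1*a2*a3 + (a0*d0*c1*a2*c2*a3 + a0*d0*b1*a2*c2*a3))) + ((a0*d0*b1*a2*b2*a3 + (a0*d0*b1*a2*b2*c2*a3 + a0*d0*b1*c1*a2*a3)) + (a0*d0*b1*c1*a2*b2*a3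 + (a0*d0*a1*d3 + a0*d0*a1*e2*a3)))))))) + (((((((a0*d0*a1*d2 + a0*d0*a1*d2*a3) + ((3:F2)*a0*d0*a1*a2*a3 + ((2:F2)*a0*d0*a1*a2*d2*a3 + a0*d0*a1*e1*a3))) + ((a0*d0*a1*e1*a2 + ((2:F2)*a0*d0*a1*d1*d2*a3 + (4:F2)*a0*d0*a1*d1*a2*a3)) + (a0*d0*a1*c1*c2*a3 + (a0*d0*a1*c1*a2*a3 + a0*d0*a1*b1*b2*c2*a3)))) + (((a0*d0*a1*b1*a2*c2*a3 + a0*d0*a1*b1*a2*b2*a3) + (a0*d0*a1*b1*c1*b2*a3 + (a0*d0*a1*b1*c1*a2*a3 + a0*d0*e0*a2*a3))) + ((a0*d0*e0*a1*a3 + (a0*d0*e0*a1*a2 + a0*c0*a2*d2*a3)) + (a0*c0*a2*c2*d2*a3 + (a0*c0*d1*a2*a3 + a0*c0*d1*a2*c2*a3))))) + ((((a0*c0*c1*a2*d2*a3 + a0*c0*c1*d1*a2*a3) + (a0*c0*b1*a2*d2*a3 + (a0*c0*b1*a2*b2*d2*a3 + a0*c0*b1*d1*a2*a3))) + ((a0*c0*b1*d1*a2*b2*a3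 + (a0*c0*a1*d2*a3 + a0*c0*a1*c2*d2*a3)) + ((4:F2)*a0*c0*a1*a2*a3 + ((2:F2)*a0*c0*a1*a2*d2*a3 + (2:F2)*a0*c0*a1*a2*c2*a3)))) + (((a0*c0*a1*d1*a3 + a0*c0*a1*d1*c2*a3) + (a0*c0*a1*d1*a2 + ((2:F2)*a0*c0*a1*d1*a2*a3 + a0*c0*a1*c1*d2*a3))) + (((2:F2)*a0*c0*a1*c1*a2*a3 + (a0*c0*a1*c1*d1*a3 + a0*c0*a1*c1*d1*a2)) + (a0*c0*a1*b1*b2*d2*a3 + ((2:F2)*a0*c0*a1*b1*a2*a3 + a0*c0*a1*b1*a2*d2*a3)))))) + ((((((2:F2)*a0*c0*a1*b1*a2*b2*a3 + a0*c0*a1*b1*d1*b2*a3) + (a0*c0*a1*b1*d1*a2*a3 + (a0*c0*d0*a2*a3 + a0*c0*d0*a2*c2*a3))) + ((a0*c0*d0*c1*a2*a3 + (a0*c0*d0*b1*a2*a3 + a0*c0*d0*b1*a2*b2*a3)) + (a0*c0*d0*a1*a3 + (a0*c0*d0*a1*c2*a3 + a0*c0*d0*a1*a2)))) + ((((2:F2)*a0*c0*d0*a1*a2*a3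 + a0*c0*d0*a1*c1*a3) + (a0*c0*d0*a1*c1*a2 + (a0*c0*d0*a1*b1*b2*a3 + a0*c0*d0*a1*b1*a2*a3))) + ((a0*b0*a2*c2*d2*a3 + (a0*b0*a2*b2*d2*a3 + a0*b0*a2*b2*c2*d2*a3)) + (a0*b0*d1*a2*c2*a3 + (a0*b0*d1*a2*b2*a3 + a0*b0*d1*a2*b2*c2*a3))))) + ((((a0*b0*c1*a2*d2*a3 + a0*b0*c1*a2*b2*d2*a3) + (a0*b0*c1*d1*a2*a3 + (a0*b0*c1*d1*a2*b2*a3 + (3:F2)*a0*b0*b1*a2*d2*a3))) + ((a0*b0*b1*a2*c2*d2*a3 + ((3:F2)*a0*b0*b1*a2*b2*d2*a3 + (3:F2)*a0*b0*b1*d1*a2*a3)) + (a0*b0*b1*d1*a2*c2*a3 + ((3:F2)*a0*b0*b1*d1*a2*b2*a3 + a0*b0*b1*c1*a2*d2*a3)))) + (((a0*b0*b1*c1*d1*a2*a3 + a0*b0*a1*c2*d2*a3) + (a0*b0*a1*b2*d2*a3 + (a0*b0*a1*b2*c2*d2*a3 + (2:F2)*a0*b0*a1*a2*a3))) + (((2:F2)*a0*b0*a1*a2*d2*a3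 + ((4:F2)*a0*b0*a1*a2*c2*a3 + (2:F2)*a0*b0*a1*a2*c2*d2*a3)) + ((4:F2)*a0*b0*a1*a2*b2*a3 + ((2:F2)*a0*b0*a1*a2*b2*d2*a3 + (2:F2)*a0*b0*a1*a2*b2*c2*a3))))))) + ((((((a0*b0*a1*d1*c2*a3 + a0*b0*a1*d1*b2*a3) + (a0*b0*a1*d1*b2*c2*a3 + ((2:F2)*a0*b0*a1*d1*a2*a3 + (2:F2)*a0*b0*a1*d1*a2*c2*a3))) + (((2:F2)*a0*b0*a1*d1*a2*b2*a3 + (a0*b0*a1*c1*d2*a3 + a0*b0*a1*c1*b2*d2*a3)) + ((4:F2)*a0*b0*a1*c1*a2*a3 + ((2:F2)*a0*b0*a1*c1*a2*d2*a3 + (2:F2)*a0*b0*a1*c1*a2*b2*a3)))) + (((a0*b0*a1*c1*d1*a3 + a0*b0*a1*c1*d1*b2*a3) + (a0*b0*a1*c1*d1*a2 + ((2:F2)*a0*b0*a1*c1*d1*a2*a3 + a0*b0*a1*b1*d2*a3))) + ((a0*b0*a1*b1*c2*d2*a3 + ((3:F2)*a0*b0*a1*b1*b2*d2*a3 + (10:F2)*a0*b0*a1*b1*a2*a3))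 + ((6:F2)*a0*b0*a1*b1*a2*d2*a3 + ((2:F2)*a0*b0*a1*b1*a2*c2*a3 + (8:F2)*a0*b0*a1*b1*a2*b2*a3))))) + (((((2:F2)*a0*b0*a1*b1*a2*b2*d2*a3 + a0*b0*a1*b1*d1*a3) + (a0*b0*a1*b1*d1*c2*a3 + ((3:F2)*a0*b0*a1*b1*d1*b2*a3 + a0*b0*a1*b1*d1*a2))) + (((6:F2)*a0*b0*a1*b1*d1*a2*a3 + ((2:F2)*a0*b0*a1*b1*d1*a2*b2*a3 + a0*b0*a1*b1*c1*d2*a3)) + ((2:F2)*a0*b0*a1*b1*c1*a2*a3 + (a0*b0*a1*b1*c1*d1*a3 + a0*b0*a1*b1*c1*d1*a2)))) + (((a0*b0*d0*a2*c2*a3 + a0*b0*d0*a2*b2*a3) + (a0*b0*d0*a2*b2*c2*a3 + (a0*b0*d0*c1*a2*a3 + a0*b0*d0*c1*a2*b2*a3))) + (((3:F2)*a0*b0*d0*b1*a2*a3 + (a0*b0*d0*b1*a2*c2*a3 + (3:F2)*a0*b0*d0*b1*a2*b2*a3)) + (a0*b0*d0*b1*c1*a2*a3 + (a0*b0*d0*a1*c2*a3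 + a0*b0*d0*a1*b2*a3)))))) + (((((a0*b0*d0*a1*b2*c2*a3 + (2:F2)*a0*b0*d0*a1*a2*a3) + ((2:F2)*a0*b0*d0*a1*a2*c2*a3 + ((2:F2)*a0*b0*d0*a1*a2*b2*a3 + a0*b0*d0*a1*c1*a3))) + ((a0*b0*d0*a1*c1*b2*a3 + (a0*b0*d0*a1*c1*a2 + (2:F2)*a0*b0*d0*a1*c1*a2*a3)) + (a0*b0*d0*a1*b1*a3 + (a0*b0*d0*a1*b1*c2*a3 + (3:F2)*a0*b0*d0*a1*b1*b2*a3)))) + (((a0*b0*d0*a1*b1*a2 + (6:F2)*a0*b0*d0*a1*b1*a2*a3) + ((2:F2)*a0*b0*d0*a1*b1*a2*b2*a3 + (a0*b0*d0*a1*b1*c1*a3 + a0*b0*d0*a1*b1*c1*a2))) + ((a0*b0*c0*a2*d2*a3 + (a0*b0*c0*a2*b2*d2*a3 + a0*b0*c0*d1*a2*a3)) + (a0*b0*c0*d1*a2*b2*a3 + (a0*b0*c0*b1*a2*d2*a3 + a0*b0*c0*b1*d1*a2*a3))))) + ((((a0*b0*c0*a1*d2*a3 + a0*b0*c0*a1*b2*d2*a3)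 + ((4:F2)*a0*b0*c0*a1*a2*a3 + ((2:F2)*a0*b0*c0*a1*a2*d2*a3 + (2:F2)*a0*b0*c0*a1*a2*b2*a3))) + ((a0*b0*c0*a1*d1*a3 + (a0*b0*c0*a1*d1*b2*a3 + a0*b0*c0*a1*d1*a2)) + ((2:F2)*a0*b0*c0*a1*d1*a2*a3 + (a0*b0*c0*a1*b1*d2*a3 + (2:F2)*a0*b0*c0*a1*b1*a2*a3)))) + (((a0*b0*c0*a1*b1*d1*a3 + a0*b0*c0*a1*b1*d1*a2) + (a0*b0*c0*d0*a2*a3 + (a0*b0*c0*d0*a2*b2*a3 + a0*b0*c0*d0*b1*a2*a3))) + ((a0*b0*c0*d0*a1*a3 + (a0*b0*c0*d0*a1*b2*a3 + a0*b0*c0*d0*a1*a2)) + ((2:F2)*a0*b0*c0*d0*a1*a2*a3 + (a0*b0*c0*d0*a1*b1*a3 + a0*b0*c0*d0*a1*b1*a2)))))))))) * htwo))))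
end

section
/- Let G = 32Γ₃f on 𝔽₂⁵ with its explicit multiplication. The subset K = {(0,b,c,d,e) : b,c,d,e ∈ 𝔽₂} (elements with first coordinate a = 0) is a subgroup of G of order 16, and K is isomorphic to C₈ × C₂ (the direct product of a cyclic group of order 8 and one of order 2). -/
/-- The subgroup `K = {(0,b,c,d,e)}` of `32Γ₃f`. -/
def K : Subgroup G5 where
  carrier := {g : G5 | aG g = 0}
  one_mem' := by decide
  mul_mem' := fun {a b} ha hb =>
    (by decide : ∀ a b : G5, aG a = 0 → aG b = 0 → aG (a * b) = 0) a b ha hb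
  inv_mem' := fun {a} ha =>
    (by decide : ∀ a : G5, aG a = 0 → aG a⁻¹ = 0) a ha

instance : DecidablePred (· ∈ K) := fun g => decidable_of_iff (aG g = 0) Iff.rfl

instance : Fintype K := Subtype.fintype _

def phiK (p : ZMod 8 × ZMod 2) : G5 := f2 ^ p.1.val * (f3 * f4) ^ p.2.val

lemma phiK_mem : ∀ p, phiK p ∈ K := by decide

lemma phiK_add : ∀ p q, phiK (p + q) = phiK p * phiK q := by decide

lemma phiK_inj : Function.Injective phiK := by decide

def psiK : Multiplicative (ZMod 8 × ZMod 2) →* K where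
  toFun x := ⟨phiK x.toAdd, phiK_mem _⟩
  map_one' := by apply Subtype.ext; decide
  map_mul' a b := Subtype.ext (phiK_add a.toAdd b.toAdd)

/-- The subset of `32Γ₃f` of elements with first coordinate 0 is a subgroup
of order 16 isomorphic to `C₈ × C₂`. -/
theorem stmt_13 :
    (∀ g : G5, g ∈ K ↔ aG g = 0) ∧ Nat.card K = 16 ∧
    Nonempty (K ≃* Multiplicative (ZMod 8 × ZMod 2)) := by
  refine ⟨fun g => Iff.rfl, ?_, ?_⟩
  · rw [Nat.card_eq_fintype_card]; decide
  · have hinj : Function.Injective psiK := fun a b h =>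
      Multiplicative.toAdd.injective (phiK_inj (congrArg Subtype.val h))
    have hbij : Function.Bijective psiK := by
      rw [Fintype.bijective_iff_injective_and_card]
      refine ⟨hinj, ?_⟩
      rw [Fintype.card_multiplicative]
      decide
    exact ⟨(MulEquiv.ofBijective psiK hbij).symm⟩
end

section
/- Let D be the dihedral group on 𝔽₂³ with multiplication (a₁,b₁,c₁)·(a₂,b₂,c₂) = (a₁+a₂, b₁+b₂, c₁+c₂+b₁a₂+b₁b₂). The 2-cochain α(g₁,g₂) = a₁a₂ is a 2-cocycle on D with trivial 𝔽₂-coefficients which is not a coboundary: there is no s : D → 𝔽₂ with a₁a₂ = s(g₂) + s(g₁g₂) + s(g₁) for all g₁,g₂ ∈ D. -/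
set_option maxRecDepth 10000 in
/-- `α(g₁,g₂) = a₁a₂` is a 2-cocycle on `D₈` which is not a coboundary. -/
theorem stmt_18 :
    (∀ g1 g2 g3 : D3,
      aD g2 * aD g3 + aD (g1 * g2) * aD g3 + aD g1 * aD (g2 * g3)
        + aD g1 * aD g2 = 0) ∧
    (¬ ∃ s : D3 → F2, ∀ g1 g2 : D3,
      aD g1 * aD g2 = s g2 + s (g1 * g2) + s g1) := by
  exact ⟨by decide, by decide⟩
end
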